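/- Let E be a pseudo-extended-metric space, let Γ : ℝ → E be any function, and let r > 0. Then ∫⁻_{γ ∈ [0,1]} ( sup { edist(Γ(x), Γ(y)) : x, y ∈ [0,1] ∩ [γ − r, γ + r] } ) dγ ≤ 2r · V, where V is the total variation of Γ on [0,1] (the supremum over finite increasing sequences x₀ ≤ x₁ ≤ ⋯ ≤ x_k in [0,1] of Σ_j edist(Γ(x_j), Γ(x_{j−1}))), the integral is the Lebesgue lower integral, and the inequality is in [0,∞]. -/

import Mathlib

open MeasureTheory

/-- Oscillation-integral bound: for any path `Γ : ℝ → E` into a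
pseudo-extended-metric space and any `r > 0`, the lower Lebesgue integral over
`γ ∈ [0,1]` of the oscillation of `Γ` on `[0,1] ∩ [γ − r, γ + r]` is at most
`2r` times the total variation of `Γ` on `[0,1]`. -/
theorem oscillation_integral_le_variation
    {E : Type*} [PseudoEMetricSpace E] (Γ : ℝ → E) (r : ℝ) (hr : 0 < r) :
    (∫⁻ γ in Set.Icc (0:ℝ) 1,
        ⨆ x ∈ Set.Icc (0:ℝ) 1 ∩ Set.Icc (γ - r) (γ + r),
          ⨆ y ∈ Set.Icc (0:ℝ) 1 ∩ Set.Icc (γ - r) (γ + r),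
            edist (Γ x) (Γ y))
      ≤ ENNReal.ofReal (2 * r) * eVariationOn Γ (Set.Icc (0:ℝ) 1) := by
  set V := eVariationOn Γ (Set.Icc (0:ℝ) 1) with hVdef
  by_cases hV : V = ⊤
  · rw [hV, ENNReal.mul_top (by simpa using (by positivity : (0:ℝ) < 2 * r))]
    exact le_top
  -- the variation function
  set v : ℝ → ENNReal := fun t => eVariationOn Γ (Set.Icc (0:ℝ) 1 ∩ Set.Iic t) with hv
  have hvmono : Monotone v := fun a b hab =>
    eVariationOn.mono Γ (Set.inter_subset_inter_right _ (Set.Iic_subset_Iic.2 hab))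
  have hvleV : ∀ t, v t ≤ V := fun t => eVariationOn.mono Γ Set.inter_subset_left
  have hvmeas : Measurable v := hvmono.measurable
  -- pointwise key bound
  have key : ∀ γ : ℝ,
      (⨆ x ∈ Set.Icc (0:ℝ) 1 ∩ Set.Icc (γ - r) (γ + r),
        ⨆ y ∈ Set.Icc (0:ℝ) 1 ∩ Set.Icc (γ - r) (γ + r),
          edist (Γ x) (Γ y)) + v (γ - r) ≤ v (γ + r) := by
    intro γ
    have hosc : (⨆ x ∈ Set.Icc (0:ℝ) 1 ∩ Set.Icc (γ - r) (γ + r),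
        ⨆ y ∈ Set.Icc (0:ℝ) 1 ∩ Set.Icc (γ - r) (γ + r), edist (Γ x) (Γ y))
        ≤ eVariationOn Γ (Set.Icc (0:ℝ) 1 ∩ Set.Icc (γ - r) (γ + r)) := by
      refine iSup₂_le fun x hx => iSup₂_le fun y hy => ?_
      exact eVariationOn.edist_le Γ hx hy
    have hadd : v (γ - r) + eVariationOn Γ (Set.Icc (0:ℝ) 1 ∩ Set.Icc (γ - r) (γ + r))
        ≤ v (γ + r) := by
      refine le_trans (eVariationOn.add_le_union Γ ?_) (eVariationOn.mono Γ ?_)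
      · rintro x ⟨-, hx⟩ y ⟨-, hy⟩
        exact le_trans hx hy.1
      · rintro x (⟨hx1, hx2⟩ | ⟨hx1, hx2⟩)
        · exact ⟨hx1, Set.mem_Iic.2 ((Set.mem_Iic.1 hx2).trans (by linarith))⟩
        · exact ⟨hx1, hx2.2⟩
    calc _ ≤ eVariationOn Γ (Set.Icc (0:ℝ) 1 ∩ Set.Icc (γ - r) (γ + r)) + v (γ - r) :=
          add_le_add_left hosc _
      _ = v (γ - r) + eVariationOn Γ (Set.Icc (0:ℝ) 1 ∩ Set.Icc (γ - r) (γ + r)) := add_comm _ _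
      _ ≤ v (γ + r) := hadd
  -- translate integrals
  have hmeasg : Measurable fun γ : ℝ => v (γ - r) :=
    hvmeas.comp (measurable_id.sub measurable_const)
  have htrans : ∀ c : ℝ, (∫⁻ γ in Set.Icc (0:ℝ) 1, v (γ + c)) =
      ∫⁻ t in Set.Icc c (1 + c), v t := by
    intro c
    have := (measurePreserving_add_right (volume : Measure ℝ) c).setLIntegral_comp_emb
      (measurableEmbedding_addRight c) v (Set.Icc (0:ℝ) 1)
    rw [this, Set.image_add_const_Icc, zero_add]
  have hgint : (∫⁻ γ in Set.Icc (0:ℝ) 1, v (γ - r)) ≠ ⊤ := by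
    refine ne_top_of_le_ne_top ?_ (lintegral_mono fun γ => hvleV _)
    rw [setLIntegral_const, Real.volume_Icc]
    simp only [sub_zero, ENNReal.ofReal_one, mul_one]
    exact hV
  -- main chain
  have hsum : (∫⁻ γ in Set.Icc (0:ℝ) 1,
      ⨆ x ∈ Set.Icc (0:ℝ) 1 ∩ Set.Icc (γ - r) (γ + r),
        ⨆ y ∈ Set.Icc (0:ℝ) 1 ∩ Set.Icc (γ - r) (γ + r), edist (Γ x) (Γ y))
      + (∫⁻ γ in Set.Icc (0:ℝ) 1, v (γ - r))
      ≤ ENNReal.ofReal (2 * r) * V + (∫⁻ γ in Set.Icc (0:ℝ) 1, v (γ - r)) := by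
    rw [← lintegral_add_right _ hmeasg]
    calc (∫⁻ γ in Set.Icc (0:ℝ) 1,
          (⨆ x ∈ Set.Icc (0:ℝ) 1 ∩ Set.Icc (γ - r) (γ + r),
            ⨆ y ∈ Set.Icc (0:ℝ) 1 ∩ Set.Icc (γ - r) (γ + r), edist (Γ x) (Γ y)) + v (γ - r))
        ≤ ∫⁻ γ in Set.Icc (0:ℝ) 1, v (γ + r) := lintegral_mono fun γ => key γ
      _ = ∫⁻ t in Set.Icc r (1 + r), v t := htrans r
      _ ≤ ∫⁻ t in Set.Icc (-r) (1 - r) ∪ Set.Ioc (1 - r) (1 + r), v t := by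
          refine lintegral_mono_set ?_
          intro x hx
          rcases le_or_gt x (1 - r) with h | h
          · exact Or.inl ⟨by linarith [hx.1], h⟩
          · exact Or.inr ⟨h, hx.2⟩
      _ ≤ (∫⁻ t in Set.Icc (-r) (1 - r), v t) + ∫⁻ t in Set.Ioc (1 - r) (1 + r), v t :=
          lintegral_union_le _ _ _
      _ ≤ (∫⁻ t in Set.Icc (-r) (1 - r), v t) + ENNReal.ofReal (2 * r) * V := by
          gcongr
          calc (∫⁻ t in Set.Ioc (1 - r) (1 + r), v t)
              ≤ ∫⁻ _ in Set.Ioc (1 - r) (1 + r), V := lintegral_mono fun t => hvleV t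
            _ = V * volume (Set.Ioc (1 - r) (1 + r)) := setLIntegral_const _ _
            _ = ENNReal.ofReal (2 * r) * V := by
                rw [Real.volume_Ioc, mul_comm]
                congr 1
                ring_nf
      _ = (∫⁻ γ in Set.Icc (0:ℝ) 1, v (γ - r)) + ENNReal.ofReal (2 * r) * V := by
          congr 1
          have := htrans (-r)
          simp only [← sub_eq_add_neg] at this
          rw [this]
      _ = ENNReal.ofReal (2 * r) * V + (∫⁻ γ in Set.Icc (0:ℝ) 1, v (γ - r)) := add_comm _ _
  exact ENNReal.le_of_add_le_add_right hgint hsum
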